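/- Let β ∈ (0, 1/2], ε = β/2, and p ∈ [β, 1]. Set b = 1 - β, C = 2/(1+b) = 1/(1-ε), and q = 1 - p, so q ≤ b. Then with γ = 1/2, k = 2.3/(γ(1-Cb)), r = exp(-2.3)/(1-γ)², the quantity (1/(1-(Cq)^k)) · { k(C-1) + C + (r/(1-r)) [ γ k (C/(1-(1-Cb)) - 1) + (1-γ)² C/(1-(1-Cb)) ] } is bounded above by 11. -/

import Mathlib

lemma exp23_lb : (9.974 : ℝ) ≤ Real.exp 2.3 := by
  have h := Real.sum_le_exp_of_nonneg (x := 2.3) (by norm_num) 13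
  refine le_trans ?_ h
  norm_num [Finset.sum_range_succ, Nat.factorial]

lemma exp_neg23_ub : Real.exp (-2.3) ≤ 1 / 9.974 := by
  rw [Real.exp_neg, one_div]
  exact inv_anti₀ (by norm_num) exp23_lb

set_option maxHeartbeats 1000000 in
/-- the explicit numerical bound in the Huber Bernoulli factory cost analysis. -/
theorem stmt_3 (β p b C q γ k r : ℝ)
    (hβ0 : 0 < β) (hβ : β ≤ 1 / 2) (hp1 : β ≤ p) (hp2 : p ≤ 1)
    (hb : b = 1 - β) (hC : C = 2 / (1 + b)) (hq : q = 1 - p) (hγ : γ = 1 / 2)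
    (hk : k = 2.3 / (γ * (1 - C * b))) (hr : r = Real.exp (-2.3) / (1 - γ) ^ 2) :
    (1 / (1 - (C * q) ^ k)) *
      (k * (C - 1) + C +
        (r / (1 - r)) *
          (γ * k * (C / (1 - (1 - C * b)) - 1) + (1 - γ) ^ 2 * (C / (1 - (1 - C * b)))))
      ≤ 11 := by
  have hb12 : (1:ℝ)/2 ≤ b := by rw [hb]; linarith
  have hb1 : b < 1 := by rw [hb]; linarith
  have hbpos : (0:ℝ) < b := by linarith
  have h1b : (0:ℝ) < 1 + b := by linarith
  have h1mb : (0:ℝ) < 1 - b := by linarith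
  have hCpos : 0 < C := by rw [hC]; positivity
  have hCb : 1 - C * b = (1 - b) / (1 + b) := by
    rw [hC]; field_simp; ring
  have hCbpos : 0 < 1 - C * b := by rw [hCb]; positivity
  have hCb0 : 0 < C * b := mul_pos hCpos hbpos
  have hkval : k = 4.6 * (1 + b) / (1 - b) := by
    rw [hk, hγ, hCb]
    rw [div_eq_div_iff (by positivity) (by positivity)]
    field_simp
    ring
  have hkpos : 0 < k := by rw [hkval]; positivity
  -- exp bounds
  have hx : Real.exp (-2.3) ≤ 1 / 9.974 := exp_neg23_ub
  have hx0 : 0 < Real.exp (-2.3) := Real.exp_pos _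
  -- bound on the power
  have hq0 : 0 ≤ q := by rw [hq]; linarith
  have hqb : q ≤ b := by rw [hq, hb]; linarith
  have hCq0 : 0 ≤ C * q := by positivity
  have hstep1 : (C * q) ^ k ≤ (C * b) ^ k :=
    Real.rpow_le_rpow hCq0 (by nlinarith) hkpos.le
  have hlog : Real.log (C * b) ≤ C * b - 1 := Real.log_le_sub_one_of_pos hCb0
  have hkCb : k * (C * b - 1) = -4.6 := by
    have hcb1 : C * b - 1 = -((1 - b) / (1 + b)) := by rw [← hCb]; ring
    rw [hkval, hcb1]
    field_simp
  have hstep2 : (C * b) ^ k ≤ Real.exp (-4.6) := by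
    rw [Real.rpow_def_of_pos hCb0]
    apply Real.exp_le_exp.mpr
    calc Real.log (C * b) * k ≤ (C * b - 1) * k :=
          mul_le_mul_of_nonneg_right hlog hkpos.le
      _ = -4.6 := by rw [mul_comm]; exact hkCb
  have hexp46 : Real.exp (-4.6) ≤ (1/9.974) * (1/9.974) := by
    have h : Real.exp (-4.6) = Real.exp (-2.3) * Real.exp (-2.3) := by
      rw [← Real.exp_add]; norm_num
    rw [h]
    exact mul_le_mul hx hx hx0.le (by norm_num)
  have hP0 : 0 ≤ (C * q) ^ k := Real.rpow_nonneg hCq0 k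
  have hPu : (C * q) ^ k ≤ (1/9.974) * (1/9.974) :=
    le_trans (le_trans hstep1 hstep2) hexp46
  have hdenP : (0:ℝ) < 1 - (1/9.974) * (1/9.974) := by norm_num
  have hden : (0:ℝ) < 1 - (C * q) ^ k := by nlinarith
  have hA : 1 / (1 - (C * q) ^ k) ≤ 1 / (1 - (1/9.974) * (1/9.974)) :=
    one_div_le_one_div_of_le hdenP (by linarith)
  have hA0 : 0 ≤ 1 / (1 - (C * q) ^ k) := by positivity
  -- bounds on r/(1-r)
  have hrval : r = 4 * Real.exp (-2.3) := by
    rw [hr, hγ]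
    have h14 : ((1:ℝ) - 1/2) ^ 2 = 1/4 := by norm_num
    rw [h14]
    ring
  have hr0 : 0 ≤ r := by rw [hrval]; positivity
  have hru : r ≤ 4 / 9.974 := by rw [hrval]; nlinarith
  have h1r : (0:ℝ) < 1 - r := by
    have : (4:ℝ)/9.974 < 1 := by norm_num
    linarith
  have hR0 : 0 ≤ r / (1 - r) := by positivity
  have hRle : r / (1 - r) ≤ (4/9.974) / (1 - 4/9.974) :=
    div_le_div₀ (by norm_num) hru (by norm_num) (by linarith)
  -- rewrite the bracket
  have hCne : C ≠ 0 := ne_of_gt hCpos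
  have hG : k * (C - 1) + C +
      (r / (1 - r)) *
        (γ * k * (C / (1 - (1 - C * b)) - 1) + (1 - γ) ^ 2 * (C / (1 - (1 - C * b))))
      = 4.6 + 2 / (1 + b) + (r / (1 - r)) * (2.3 + 2.55 / b) := by
    have h2 : 1 - (1 - C * b) = C * b := by ring
    rw [h2]
    have h3 : C / (C * b) = 1 / b := by
      rw [div_eq_div_iff hCb0.ne' hbpos.ne']
      ring
    rw [h3, hγ, hkval, hC]
    field_simp
    ring
  rw [hG]
  -- bound the bracket
  have hG1 : 2 / (1 + b) ≤ 4 / 3 := by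
    rw [div_le_div_iff₀ h1b (by norm_num)]; linarith
  have hG2 : 2.55 / b ≤ 5.1 := by
    rw [div_le_iff₀ hbpos]; linarith
  have hG3 : (0:ℝ) ≤ 2.3 + 2.55 / b := by positivity
  have hRG : (r / (1 - r)) * (2.3 + 2.55 / b)
      ≤ ((4/9.974) / (1 - 4/9.974)) * 7.4 :=
    mul_le_mul hRle (by linarith) hG3 (by positivity)
  have hGle : 4.6 + 2 / (1 + b) + (r / (1 - r)) * (2.3 + 2.55 / b)
      ≤ 4.6 + 4/3 + ((4/9.974) / (1 - 4/9.974)) * 7.4 := by linarith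
  have hGnn : 0 ≤ 4.6 + 2 / (1 + b) + (r / (1 - r)) * (2.3 + 2.55 / b) := by
    have : 0 ≤ 2 / (1 + b) := by positivity
    have : 0 ≤ (r / (1 - r)) * (2.3 + 2.55 / b) := mul_nonneg hR0 hG3
    linarith
  calc (1 / (1 - (C * q) ^ k)) *
        (4.6 + 2 / (1 + b) + (r / (1 - r)) * (2.3 + 2.55 / b))
      ≤ (1 / (1 - (1/9.974) * (1/9.974))) *
        (4.6 + 4/3 + ((4/9.974) / (1 - 4/9.974)) * 7.4) := by
        exact mul_le_mul hA hGle hGnn (by positivity)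
    _ ≤ 11 := by norm_num
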